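/- arXiv:2101.02300 — 4 statements merged into one kernel-verified Lean document; each statement's English description precedes it below -/
import Mathlib

section
/- The determinant of the covariance matrix V_z = [[Gσ₁² + (G-1)σ₂², -√(G(G-1))(σ₁² + σ₂²)], [-√(G(G-1))(σ₁² + σ₂²), Gσ₂² + (G-1)σ₁²]] equals σ₁²σ₂² for all G ≥ 1 and σ₁, σ₂ > 0. -/
open Matrix

/-- The determinant of the per-quadrature noise covariance of the GKP-TMS code
equals `σ₁²σ₂²`. -/
theorem tms_covariance_det (G σ₁ σ₂ : ℝ) (hG : 1 ≤ G) (h1 : 0 < σ₁) (h2 : 0 < σ₂) :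
    (!![G * σ₁ ^ 2 + (G - 1) * σ₂ ^ 2,
        -(Real.sqrt (G * (G - 1)) * (σ₁ ^ 2 + σ₂ ^ 2));
        -(Real.sqrt (G * (G - 1)) * (σ₁ ^ 2 + σ₂ ^ 2)),
        G * σ₂ ^ 2 + (G - 1) * σ₁ ^ 2] : Matrix (Fin 2) (Fin 2) ℝ).det =
      σ₁ ^ 2 * σ₂ ^ 2 := by
  have h : Real.sqrt (G * (G - 1)) ^ 2 = G * (G - 1) :=
    Real.sq_sqrt (mul_nonneg (by linarith) (by linarith))
  rw [Matrix.det_fin_two_of]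
  linear_combination -(σ₁ ^ 2 + σ₂ ^ 2) ^ 2 * h
end

section
/- Let Z₁, Z₂ be jointly Gaussian with the GKP-TMS covariance (Var(Z₂) = σ_G² := (G-1)σ₁² + Gσ₂², Cov(Z₁,Z₂) = -√(G(G-1))(σ₁²+σ₂²), Var(Z₁|Z₂) = (σ₁σ₂/σ_G)²). Define the residual ξ = Z₁ + μ̃·R_{√(2π)}(Z₂) with μ̃ = √(G(G-1))(σ₁²+σ₂²)/σ_G². Then the probability density of ξ is Q(x) = Σ_{n∈ℤ} b_n(σ_G) · F_{σ₁σ₂/σ_G}(x + μ̃√(2π)n). -/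
open MeasureTheory Real

/-- Centered Gaussian probability density with standard deviation `σ`. -/
noncomputable def gaussPDF (σ x : ℝ) : ℝ :=
  (σ * Real.sqrt (2 * Real.pi))⁻¹ * Real.exp (-x ^ 2 / (2 * σ ^ 2))

/-- Complementary error function `Erfc x = (2/√π) ∫_x^∞ e^{-t²} dt`. -/
noncomputable def Erfc (x : ℝ) : ℝ :=
  (2 / Real.sqrt Real.pi) * ∫ t in Set.Ioi x, Real.exp (-t ^ 2)

/-- The modular-Gaussian weights `b_n(σ)`. -/
noncomputable def bCoeff (n : ℤ) (σ : ℝ) : ℝ :=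
  (1 / 2) * (Erfc (((n : ℝ) - 1 / 2) * Real.sqrt Real.pi / σ) -
    Erfc (((n : ℝ) + 1 / 2) * Real.sqrt Real.pi / σ))

/-- Generalized modulo: `R_s(z) = z - n*(z)·s` with `n*(z)` the nearest integer
to `z/s`. -/
noncomputable def Rmod (s z : ℝ) : ℝ := z - (round (z / s) : ℤ) * s

/-- Joint (per-quadrature) centered Gaussian density of `(Z₁, Z₂)` with the
GKP-TMS covariance `[[Gσ₁²+(G-1)σ₂², -√(G(G-1))(σ₁²+σ₂²)],
[-√(G(G-1))(σ₁²+σ₂²), (G-1)σ₁²+Gσ₂²]]` (whose determinant is `σ₁²σ₂²`). -/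
noncomputable def tmsJointPDF (G σ₁ σ₂ z₁ z₂ : ℝ) : ℝ :=
  (1 / (2 * Real.pi * σ₁ * σ₂)) *
    Real.exp (-(1 / (2 * σ₁ ^ 2 * σ₂ ^ 2)) *
      (((G - 1) * σ₁ ^ 2 + G * σ₂ ^ 2) * z₁ ^ 2 +
        (G * σ₁ ^ 2 + (G - 1) * σ₂ ^ 2) * z₂ ^ 2 +
        2 * Real.sqrt (G * (G - 1)) * (σ₁ ^ 2 + σ₂ ^ 2) * z₁ * z₂))

lemma integrable_exp_neg_sq' : MeasureTheory.Integrable (fun t : ℝ => Real.exp (-t ^ 2)) := by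
  simpa using integrable_exp_neg_mul_sq one_pos

lemma gaussPDF_nonneg (σ u : ℝ) (hσ : 0 < σ) : 0 ≤ gaussPDF σ u := by
  unfold gaussPDF
  have := Real.sqrt_nonneg (2 * Real.pi)
  positivity

lemma gaussPDF_le (σ u : ℝ) (hσ : 0 < σ) :
    gaussPDF σ u ≤ (σ * Real.sqrt (2 * Real.pi))⁻¹ := by
  unfold gaussPDF
  have h1 : Real.exp (-u ^ 2 / (2 * σ ^ 2)) ≤ 1 := by
    rw [Real.exp_le_one_iff]
    exact div_nonpos_of_nonpos_of_nonneg (neg_nonpos.mpr (by positivity)) (by positivity)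
  have h2 : (0:ℝ) < Real.sqrt (2 * Real.pi) := Real.sqrt_pos.mpr (by positivity)
  calc (σ * Real.sqrt (2 * Real.pi))⁻¹ * Real.exp (-u ^ 2 / (2 * σ ^ 2))
      ≤ (σ * Real.sqrt (2 * Real.pi))⁻¹ * 1 := by
        apply mul_le_mul_of_nonneg_left h1 (by positivity)
    _ = (σ * Real.sqrt (2 * Real.pi))⁻¹ := mul_one _

lemma integrable_gaussPDF (σ : ℝ) (hσ : 0 < σ) :
    MeasureTheory.Integrable (gaussPDF σ) := by
  unfold gaussPDF
  have : (fun x : ℝ => (σ * Real.sqrt (2 * Real.pi))⁻¹ *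
      Real.exp (-x ^ 2 / (2 * σ ^ 2))) =
      fun x : ℝ => (σ * Real.sqrt (2 * Real.pi))⁻¹ *
      Real.exp (-(1 / (2 * σ ^ 2)) * x ^ 2) := by
    funext x; congr 1; ring_nf
  rw [this]
  exact (integrable_exp_neg_mul_sq (by positivity)).const_mul _

lemma continuous_gaussPDF (σ : ℝ) : Continuous (gaussPDF σ) := by
  unfold gaussPDF
  fun_prop

/-- difference of Erfc's as an integral over a segment -/
lemma erfc_sub {a b : ℝ} (hab : a ≤ b) :
    Erfc a - Erfc b = (2 / Real.sqrt Real.pi) * ∫ t in Set.Ioc a b, Real.exp (-t ^ 2) := by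
  unfold Erfc
  rw [← mul_sub]
  congr 1
  rw [sub_eq_iff_eq_add, ← setIntegral_union (Set.Ioc_disjoint_Ioi le_rfl) measurableSet_Ioi
    integrable_exp_neg_sq'.integrableOn integrable_exp_neg_sq'.integrableOn,
    Set.Ioc_union_Ioi_eq_Ioi hab]

/-- the Gaussian mass of the `n`-th cell equals `bCoeff n σ` -/
lemma gauss_cell (σ : ℝ) (hσ : 0 < σ) (n : ℤ) :
    (∫ z in Set.Ico (((n : ℝ) - 1 / 2) * Real.sqrt (2 * Real.pi))
        (((n : ℝ) + 1 / 2) * Real.sqrt (2 * Real.pi)), gaussPDF σ z) = bCoeff n σ := by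
  have hπ : (0:ℝ) < Real.pi := Real.pi_pos
  have hsπ : 0 < Real.sqrt Real.pi := Real.sqrt_pos.mpr hπ
  have hs2 : 0 < Real.sqrt 2 := by positivity
  have h2π : Real.sqrt (2 * Real.pi) = Real.sqrt 2 * Real.sqrt Real.pi :=
    Real.sqrt_mul (by norm_num) _
  have hspos : (0:ℝ) < Real.sqrt (2 * Real.pi) := Real.sqrt_pos.mpr (by positivity)
  have hab : ((n : ℝ) - 1 / 2) * Real.sqrt (2 * Real.pi)
      ≤ ((n : ℝ) + 1 / 2) * Real.sqrt (2 * Real.pi) :=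
    mul_le_mul_of_nonneg_right (by linarith) hspos.le
  have hc : Real.sqrt 2 * σ ≠ 0 := by positivity
  have hcsq : (Real.sqrt 2 * σ) ^ 2 = 2 * σ ^ 2 := by
    rw [mul_pow, Real.sq_sqrt (by norm_num : (0:ℝ) ≤ 2)]
  have key : ∀ z : ℝ, gaussPDF σ z =
      (σ * Real.sqrt (2 * Real.pi))⁻¹ * Real.exp (-(z / (Real.sqrt 2 * σ)) ^ 2) := by
    intro z
    unfold gaussPDF
    congr 2
    rw [div_pow, hcsq, neg_div]
  have ha' : ((n : ℝ) - 1 / 2) * Real.sqrt (2 * Real.pi) / (Real.sqrt 2 * σ)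
      = ((n : ℝ) - 1 / 2) * Real.sqrt Real.pi / σ := by
    rw [h2π]; field_simp
  have hb' : ((n : ℝ) + 1 / 2) * Real.sqrt (2 * Real.pi) / (Real.sqrt 2 * σ)
      = ((n : ℝ) + 1 / 2) * Real.sqrt Real.pi / σ := by
    rw [h2π]; field_simp
  have hab' : ((n : ℝ) - 1 / 2) * Real.sqrt Real.pi / σ
      ≤ ((n : ℝ) + 1 / 2) * Real.sqrt Real.pi / σ := by
    gcongr
    linarith
  calc (∫ z in Set.Ico (((n : ℝ) - 1 / 2) * Real.sqrt (2 * Real.pi))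
        (((n : ℝ) + 1 / 2) * Real.sqrt (2 * Real.pi)), gaussPDF σ z)
      = ∫ z in Set.Ioc (((n : ℝ) - 1 / 2) * Real.sqrt (2 * Real.pi))
        (((n : ℝ) + 1 / 2) * Real.sqrt (2 * Real.pi)), gaussPDF σ z :=
        setIntegral_congr_set Ico_ae_eq_Ioc
    _ = ∫ z in ((n : ℝ) - 1 / 2) * Real.sqrt (2 * Real.pi)..((n : ℝ) + 1 / 2) *
        Real.sqrt (2 * Real.pi), gaussPDF σ z := (intervalIntegral.integral_of_le hab).symm
    _ = ∫ z in ((n : ℝ) - 1 / 2) * Real.sqrt (2 * Real.pi)..((n : ℝ) + 1 / 2) *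
        Real.sqrt (2 * Real.pi), (σ * Real.sqrt (2 * Real.pi))⁻¹ *
          Real.exp (-(z / (Real.sqrt 2 * σ)) ^ 2) := by simp only [key]
    _ = (σ * Real.sqrt (2 * Real.pi))⁻¹ * ∫ z in ((n : ℝ) - 1 / 2) *
        Real.sqrt (2 * Real.pi)..((n : ℝ) + 1 / 2) * Real.sqrt (2 * Real.pi),
          Real.exp (-(z / (Real.sqrt 2 * σ)) ^ 2) := by
        rw [intervalIntegral.integral_const_mul]
    _ = (σ * Real.sqrt (2 * Real.pi))⁻¹ * ((Real.sqrt 2 * σ) *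
        ∫ t in ((n : ℝ) - 1 / 2) * Real.sqrt Real.pi / σ..((n : ℝ) + 1 / 2) *
          Real.sqrt Real.pi / σ, Real.exp (-t ^ 2)) := by
        rw [intervalIntegral.integral_comp_div (fun t => Real.exp (-t ^ 2)) hc,
          smul_eq_mul, ha', hb']
    _ = bCoeff n σ := by
        unfold bCoeff
        rw [erfc_sub hab', intervalIntegral.integral_of_le hab', h2π]
        field_simp

lemma round_cell {p : ℝ} (hp : 0 < p) (n : ℤ) (z : ℝ) :
    z ∈ Set.Ico (((n : ℝ) - 1 / 2) * p) (((n : ℝ) + 1 / 2) * p) ↔ round (z / p) = n := by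
  have e1 : ((((n : ℝ) - 1 / 2) * p ≤ z)) ↔ ((n : ℝ) - 1 / 2 ≤ z / p) := (le_div_iff₀ hp).symm
  have e2 : (z < ((n : ℝ) + 1 / 2) * p) ↔ (z / p < (n : ℝ) + 1 / 2) := (div_lt_iff₀ hp).symm
  rw [Set.mem_Ico, e1, e2, round_eq, Int.floor_eq_iff]
  push_cast
  constructor <;> rintro ⟨u, v⟩ <;> exact ⟨by linarith, by linarith⟩

lemma tms_factor (G σ₁ σ₂ : ℝ) (hG : 1 ≤ G) (h1 : 0 < σ₁) (h2 : 0 < σ₂) (z₁ z₂ : ℝ) :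
    tmsJointPDF G σ₁ σ₂ z₁ z₂ =
      gaussPDF (σ₁ * σ₂ / Real.sqrt ((G - 1) * σ₁ ^ 2 + G * σ₂ ^ 2))
        (z₁ + (Real.sqrt (G * (G - 1)) * (σ₁ ^ 2 + σ₂ ^ 2) /
          ((G - 1) * σ₁ ^ 2 + G * σ₂ ^ 2)) * z₂) *
      gaussPDF (Real.sqrt ((G - 1) * σ₁ ^ 2 + G * σ₂ ^ 2)) z₂ := by
  have hπ : (0:ℝ) < Real.pi := Real.pi_pos
  have hS : (0:ℝ) < (G - 1) * σ₁ ^ 2 + G * σ₂ ^ 2 := by nlinarith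
  have hσG : Real.sqrt ((G - 1) * σ₁ ^ 2 + G * σ₂ ^ 2) ^ 2
      = (G - 1) * σ₁ ^ 2 + G * σ₂ ^ 2 := Real.sq_sqrt hS.le
  have hσGpos : 0 < Real.sqrt ((G - 1) * σ₁ ^ 2 + G * σ₂ ^ 2) := Real.sqrt_pos.mpr hS
  have hA : Real.sqrt (G * (G - 1)) ^ 2 = G * (G - 1) := Real.sq_sqrt (by nlinarith)
  have hppos : (0:ℝ) < Real.sqrt (2 * Real.pi) := Real.sqrt_pos.mpr (by positivity)
  have hp : Real.sqrt (2 * Real.pi) ^ 2 = 2 * Real.pi := Real.sq_sqrt (by positivity)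
  have hpre : (1 : ℝ) / (2 * Real.pi * σ₁ * σ₂) =
      (σ₁ * σ₂ / Real.sqrt ((G - 1) * σ₁ ^ 2 + G * σ₂ ^ 2) * Real.sqrt (2 * Real.pi))⁻¹ *
      (Real.sqrt ((G - 1) * σ₁ ^ 2 + G * σ₂ ^ 2) * Real.sqrt (2 * Real.pi))⁻¹ := by
    have h2 : Real.sqrt 2 ^ 2 = 2 := Real.sq_sqrt (by norm_num)
    have hπ2 : Real.sqrt Real.pi ^ 2 = Real.pi := Real.sq_sqrt hπ.le
    generalize Real.sqrt ((G - 1) * σ₁ ^ 2 + G * σ₂ ^ 2) = s at hσGpos ⊢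
    field_simp
    rw [hp]
  have hexp : -(1 / (2 * σ₁ ^ 2 * σ₂ ^ 2)) *
      (((G - 1) * σ₁ ^ 2 + G * σ₂ ^ 2) * z₁ ^ 2 +
        (G * σ₁ ^ 2 + (G - 1) * σ₂ ^ 2) * z₂ ^ 2 +
        2 * Real.sqrt (G * (G - 1)) * (σ₁ ^ 2 + σ₂ ^ 2) * z₁ * z₂) =
      -(z₁ + Real.sqrt (G * (G - 1)) * (σ₁ ^ 2 + σ₂ ^ 2) /
          ((G - 1) * σ₁ ^ 2 + G * σ₂ ^ 2) * z₂) ^ 2 /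
        (2 * (σ₁ * σ₂ / Real.sqrt ((G - 1) * σ₁ ^ 2 + G * σ₂ ^ 2)) ^ 2) +
      -z₂ ^ 2 / (2 * Real.sqrt ((G - 1) * σ₁ ^ 2 + G * σ₂ ^ 2) ^ 2) := by
    rw [div_pow, hσG]
    have hA' := hA
    generalize hAv : Real.sqrt (G * (G - 1)) = A at hA' ⊢
    generalize hSv : (G - 1) * σ₁ ^ 2 + G * σ₂ ^ 2 = S at hS ⊢
    have hSne := hS.ne'
    field_simp
    subst hSv
    ring_nf
    rw [hA']
    ring
  unfold tmsJointPDF gaussPDF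
  rw [mul_mul_mul_comm, ← Real.exp_add, hpre, hexp]

/-- The density of the residual `ξ = Z₁ + μ̃ R_{√(2π)}(Z₂)` of the GKP-TMS code is
`Q(x) = Σ_{n∈ℤ} b_n(σ_G) F_{σ₁σ₂/σ_G}(x + μ̃√(2π)n)`, with
`σ_G = √((G-1)σ₁² + Gσ₂²)` and `μ̃ = √(G(G-1))(σ₁²+σ₂²)/σ_G²`. -/
theorem tms_residual_density (G σ₁ σ₂ : ℝ) (hG : 1 ≤ G) (h1 : 0 < σ₁) (h2 : 0 < σ₂)
    (x : ℝ) :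
    (∫ z₂ : ℝ, tmsJointPDF G σ₁ σ₂
        (x - (Real.sqrt (G * (G - 1)) * (σ₁ ^ 2 + σ₂ ^ 2) /
            ((G - 1) * σ₁ ^ 2 + G * σ₂ ^ 2)) * Rmod (Real.sqrt (2 * Real.pi)) z₂) z₂) =
      ∑' n : ℤ, bCoeff n (Real.sqrt ((G - 1) * σ₁ ^ 2 + G * σ₂ ^ 2)) *
        gaussPDF (σ₁ * σ₂ / Real.sqrt ((G - 1) * σ₁ ^ 2 + G * σ₂ ^ 2))
          (x + (Real.sqrt (G * (G - 1)) * (σ₁ ^ 2 + σ₂ ^ 2) /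
              ((G - 1) * σ₁ ^ 2 + G * σ₂ ^ 2)) * Real.sqrt (2 * Real.pi) * (n : ℝ)) := by
  have hπ : (0:ℝ) < Real.pi := Real.pi_pos
  have hS : (0:ℝ) < (G - 1) * σ₁ ^ 2 + G * σ₂ ^ 2 := by nlinarith
  have hppos : (0:ℝ) < Real.sqrt (2 * Real.pi) := Real.sqrt_pos.mpr (by positivity)
  set p := Real.sqrt (2 * Real.pi) with hpdef
  set σG := Real.sqrt ((G - 1) * σ₁ ^ 2 + G * σ₂ ^ 2) with hσGdef
  set μ := Real.sqrt (G * (G - 1)) * (σ₁ ^ 2 + σ₂ ^ 2) /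
      ((G - 1) * σ₁ ^ 2 + G * σ₂ ^ 2) with hμdef
  set c := σ₁ * σ₂ / σG with hcdef
  have hσGpos : 0 < σG := Real.sqrt_pos.mpr hS
  have hcpos : 0 < c := by rw [hcdef]; positivity
  have hfun : (fun z₂ : ℝ => tmsJointPDF G σ₁ σ₂ (x - μ * Rmod p z₂) z₂)
      = fun z : ℝ => gaussPDF c (x + μ * p * ((round (z / p) : ℤ) : ℝ)) * gaussPDF σG z := by
    funext z
    rw [tms_factor G σ₁ σ₂ hG h1 h2 _ z]
    congr 2
    unfold Rmod
    ring
  rw [hfun]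
  -- measurability
  have hmeasround : Measurable fun z : ℝ => ((round (z / p) : ℤ) : ℝ) := by
    have hm : Measurable fun z : ℝ => (round (z / p) : ℤ) := by
      simp only [round_eq]
      exact ((measurable_id.div_const p).add_const (1 / 2)).floor
    exact measurable_from_top.comp hm
  have hmf : Measurable (fun z : ℝ =>
      gaussPDF c (x + μ * p * ((round (z / p) : ℤ) : ℝ)) * gaussPDF σG z) :=
    ((continuous_gaussPDF c).measurable.comp
      (measurable_const.add (hmeasround.const_mul (μ * p)))).mul
      (continuous_gaussPDF σG).measurable
  have hint : Integrable (fun z : ℝ =>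
      gaussPDF c (x + μ * p * ((round (z / p) : ℤ) : ℝ)) * gaussPDF σG z) := by
    apply Integrable.mono' ((integrable_gaussPDF σG hσGpos).const_mul ((c * p)⁻¹))
      hmf.aestronglyMeasurable
    filter_upwards with z
    rw [Real.norm_eq_abs, abs_mul, abs_of_nonneg (gaussPDF_nonneg _ _ hcpos),
      abs_of_nonneg (gaussPDF_nonneg _ _ hσGpos)]
    exact mul_le_mul_of_nonneg_right (gaussPDF_le _ _ hcpos) (gaussPDF_nonneg _ _ hσGpos)
  have hcover : (⋃ n : ℤ, Set.Ico (((n : ℝ) - 1 / 2) * p) (((n : ℝ) + 1 / 2) * p))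
      = Set.univ := by
    ext z
    simp only [Set.mem_iUnion, Set.mem_univ, iff_true]
    exact ⟨round (z / p), (round_cell hppos _ z).mpr rfl⟩
  have hdisj : Pairwise (Function.onFun Disjoint
      fun n : ℤ => Set.Ico (((n : ℝ) - 1 / 2) * p) (((n : ℝ) + 1 / 2) * p)) := by
    intro m n hmn
    simp only [Function.onFun, Set.disjoint_left]
    intro z hm hn
    exact hmn (((round_cell hppos m z).mp hm).symm.trans ((round_cell hppos n z).mp hn))
  calc (∫ z : ℝ, gaussPDF c (x + μ * p * ((round (z / p) : ℤ) : ℝ)) * gaussPDF σG z)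
      = ∫ z in Set.univ, gaussPDF c (x + μ * p * ((round (z / p) : ℤ) : ℝ)) *
          gaussPDF σG z := setIntegral_univ.symm
    _ = ∫ z in ⋃ n : ℤ, Set.Ico (((n : ℝ) - 1 / 2) * p) (((n : ℝ) + 1 / 2) * p),
          gaussPDF c (x + μ * p * ((round (z / p) : ℤ) : ℝ)) * gaussPDF σG z := by
        rw [hcover]
    _ = ∑' n : ℤ, ∫ z in Set.Ico (((n : ℝ) - 1 / 2) * p) (((n : ℝ) + 1 / 2) * p),
          gaussPDF c (x + μ * p * ((round (z / p) : ℤ) : ℝ)) * gaussPDF σG z :=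
        integral_iUnion (fun _ => measurableSet_Ico) hdisj hint.integrableOn
    _ = ∑' n : ℤ, bCoeff n σG * gaussPDF c (x + μ * p * (n : ℝ)) := by
        refine tsum_congr fun n => ?_
        rw [setIntegral_congr_fun measurableSet_Ico
          (g := fun z => gaussPDF c (x + μ * p * (n : ℝ)) * gaussPDF σG z)
          (fun z hz => by rw [(round_cell hppos n z).mp hz]),
          integral_const_mul, gauss_cell σG hσGpos n, mul_comm]
end

section
/- For any real symmetric positive semidefinite 2n×2n matrix W that commutes with Ω (equivalently, is symmetric under exchange of position and momentum quadratures in each mode pair), there exists an orthogonal symplectic matrix O such that Oᵀ W O is diagonal with the two diagonal entries in each mode pair equal. -/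
open Matrix

/-- The standard symplectic form `Ω = Diag(J, …, J)` with `J = [[0,1],[-1,0]]`,
on `n` mode pairs indexed by `Fin n × Fin 2`. -/
def OmegaN (n : ℕ) : Matrix (Fin n × Fin 2) (Fin n × Fin 2) ℝ :=
  fun p q => if p.1 = q.1 then (!![0, 1; -1, 0] : Matrix (Fin 2) (Fin 2) ℝ) p.2 q.2 else 0

namespace SymplecticDiagAux

/-- Real 2×2 representation of a complex number. -/
def rho (c : ℂ) : Matrix (Fin 2) (Fin 2) ℝ := !![c.re, -c.im; c.im, c.re]

/-- Realification of a complex n×n matrix as a 2n×2n real matrix. -/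
def realify {n : ℕ} (M : Matrix (Fin n) (Fin n) ℂ) :
    Matrix (Fin n × Fin 2) (Fin n × Fin 2) ℝ :=
  fun p q => rho (M p.1 q.1) p.2 q.2

lemma realify_mul {n : ℕ} (M N : Matrix (Fin n) (Fin n) ℂ) :
    realify M * realify N = realify (M * N) := by
  ext ⟨i, a⟩ ⟨j, b⟩
  simp only [Matrix.mul_apply, realify, Fintype.sum_prod_type, Fin.sum_univ_two]
  fin_cases a <;> fin_cases b <;>
  · simp only [rho, Fin.mk_zero, Fin.mk_one, Fin.isValue, Matrix.cons_val', Matrix.cons_val_zero,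
      Matrix.cons_val_one, Matrix.head_cons, Matrix.empty_val', Matrix.cons_val_fin_one,
      Matrix.head_fin_const, Matrix.of_apply, Complex.re_sum, Complex.im_sum,
      Complex.mul_re, Complex.mul_im, ← Finset.sum_neg_distrib]
    exact Finset.sum_congr rfl fun k _ => by ring

lemma realify_one {n : ℕ} : realify (1 : Matrix (Fin n) (Fin n) ℂ) = 1 := by
  ext ⟨i, a⟩ ⟨j, b⟩
  simp only [realify, Matrix.one_apply, Prod.mk.injEq]
  by_cases h : i = j
  · subst h
    fin_cases a <;> fin_cases b <;> simp [rho]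
  · fin_cases a <;> fin_cases b <;> simp [h, rho]

lemma realify_transpose {n : ℕ} (M : Matrix (Fin n) (Fin n) ℂ) :
    realify Mᴴ = (realify M)ᵀ := by
  ext ⟨i, a⟩ ⟨j, b⟩
  simp only [realify, Matrix.transpose_apply, Matrix.conjTranspose_apply]
  fin_cases a <;> fin_cases b <;> simp [rho]

lemma realify_diagonal {n : ℕ} (d : Fin n → ℝ) :
    realify (Matrix.diagonal fun i => (d i : ℂ)) = Matrix.diagonal fun p => d p.1 := by
  ext ⟨i, a⟩ ⟨j, b⟩
  simp only [realify, Matrix.diagonal_apply, Prod.mk.injEq]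
  by_cases h : i = j
  · subst h
    fin_cases a <;> fin_cases b <;> simp [rho]
  · fin_cases a <;> fin_cases b <;> simp [h, rho]

lemma omega_eq {n : ℕ} :
    OmegaN n = realify (Matrix.diagonal fun _ : Fin n => -Complex.I) := by
  ext ⟨i, a⟩ ⟨j, b⟩
  simp only [OmegaN, realify, Matrix.diagonal_apply]
  by_cases h : i = j
  · subst h
    fin_cases a <;> fin_cases b <;> simp [rho]
  · fin_cases a <;> fin_cases b <;> simp [h, rho]

end SymplecticDiagAux

open SymplecticDiagAux

/-- Any real symmetric positive semidefinite noise-correlation matrix `W` that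
commutes with `Ω` (symmetric between position and momentum quadratures) is
diagonalized by an orthogonal symplectic matrix `O`, with the two diagonal entries
of each mode pair equal. -/
theorem symmetric_noise_symplectic_diagonalization (n : ℕ)
    (W : Matrix (Fin n × Fin 2) (Fin n × Fin 2) ℝ)
    (hW : W.PosSemidef) (hcomm : W * OmegaN n = OmegaN n * W) :
    ∃ O : Matrix (Fin n × Fin 2) (Fin n × Fin 2) ℝ,
      Oᵀ * O = 1 ∧ Oᵀ * OmegaN n * O = OmegaN n ∧
      ∃ d : Fin n → ℝ, Oᵀ * W * O = Matrix.diagonal fun p => d p.1 := by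
  -- entrywise consequences of the commutation relation
  have hWsymm : ∀ p q, W p q = W q p := by
    intro p q
    have h := hW.1.apply p q
    rw [star_trivial] at h
    exact h.symm
  have hentry : ∀ (p : Fin n × Fin 2) (j : Fin n) (b : Fin 2),
      (W * OmegaN n) p (j, b) = (OmegaN n * W) p (j, b) := by
    intro p j b; rw [hcomm]
  have hWO : ∀ (p : Fin n × Fin 2) (j : Fin n) (b : Fin 2),
      (W * OmegaN n) p (j, b) =
        if b = 0 then -W p (j, 1) else W p (j, 0) := by
    intro p j b
    simp only [Matrix.mul_apply, OmegaN, Fintype.sum_prod_type, Fin.sum_univ_two]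
    fin_cases b <;>
      simp [mul_ite, Finset.sum_ite_eq', Fin.isValue]
  have hOW : ∀ (i : Fin n) (a : Fin 2) (q : Fin n × Fin 2),
      (OmegaN n * W) (i, a) q =
        if a = 0 then W (i, 1) q else -W (i, 0) q := by
    intro i a q
    simp only [Matrix.mul_apply, OmegaN, Fintype.sum_prod_type, Fin.sum_univ_two]
    fin_cases a <;>
      simp [ite_mul, Finset.sum_ite_eq, Fin.isValue]
  have key1 : ∀ i j : Fin n, W (i, 0) (j, 0) = W (i, 1) (j, 1) := by
    intro i j
    have h := (hWO (i, 0) j 1).symm.trans ((hentry (i, 0) j 1).trans (hOW i 0 (j, 1)))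
    simpa using h
  have key2 : ∀ i j : Fin n, W (i, 1) (j, 0) = -W (i, 0) (j, 1) := by
    intro i j
    have h := (hWO (i, 0) j 0).symm.trans ((hentry (i, 0) j 0).trans (hOW i 0 (j, 0)))
    simp only [if_pos] at h
    linarith
  -- the complex matrix
  set Z : Matrix (Fin n) (Fin n) ℂ :=
    fun i j => ⟨W (i, 0) (j, 0), W (i, 1) (j, 0)⟩ with hZdef
  have hrealZ : realify Z = W := by
    ext ⟨i, a⟩ ⟨j, b⟩
    fin_cases a <;> fin_cases b <;>
      simp only [realify, rho, hZdef, Fin.mk_zero, Fin.mk_one, Fin.isValue, Matrix.cons_val',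
        Matrix.cons_val_zero, Matrix.cons_val_one, Matrix.head_cons, Matrix.empty_val',
        Matrix.cons_val_fin_one, Matrix.head_fin_const, Matrix.of_apply]
    all_goals first
      | rfl
      | (rw [key2 i j]; ring)
      | (exact key1 i j)
  have hZ : Z.IsHermitian := by
    apply Matrix.IsHermitian.ext
    intro i j
    apply Complex.ext <;>
      simp only [hZdef, Complex.star_def, Complex.conj_re, Complex.conj_im]
    · exact hWsymm (j, 0) (i, 0)
    · linarith [key2 i j, hWsymm (i, (0 : Fin 2)) (j, (1 : Fin 2))]
  -- spectral theorem
  set U : Matrix (Fin n) (Fin n) ℂ := (hZ.eigenvectorUnitary : Matrix (Fin n) (Fin n) ℂ)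
    with hUdef
  have hUstar : Uᴴ * U = 1 := by
    have h := (Matrix.mem_unitaryGroup_iff').mp hZ.eigenvectorUnitary.2
    rwa [Matrix.star_eq_conjTranspose] at h
  have hspec := hZ.spectral_theorem
  rw [Unitary.conjStarAlgAut_apply, Matrix.star_eq_conjTranspose, ← hUdef] at hspec
  have hdiag : Uᴴ * Z * U = Matrix.diagonal (RCLike.ofReal ∘ hZ.eigenvalues) := by
    conv_lhs => rw [hspec]
    simp only [Matrix.mul_assoc]
    rw [hUstar, Matrix.mul_one, ← Matrix.mul_assoc, hUstar, Matrix.one_mul]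
  have h2 : Uᴴ * (Matrix.diagonal fun _ : Fin n => -Complex.I) * U
      = Matrix.diagonal fun _ : Fin n => -Complex.I := by
    rw [← Matrix.smul_one_eq_diagonal, Matrix.mul_smul, Matrix.smul_mul, Matrix.mul_one, hUstar]
  refine ⟨realify U, ?_, ?_, hZ.eigenvalues, ?_⟩
  · rw [← realify_transpose, realify_mul, hUstar, realify_one]
  · rw [← realify_transpose, omega_eq (n := n), realify_mul, realify_mul, h2]
  · rw [← hrealZ, ← realify_transpose, realify_mul, realify_mul, hdiag]
    rw [show (Matrix.diagonal (RCLike.ofReal ∘ hZ.eigenvalues) : Matrix (Fin n) (Fin n) ℂ)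
        = Matrix.diagonal fun i => ((hZ.eigenvalues i : ℝ) : ℂ) from rfl]
    exact realify_diagonal hZ.eigenvalues
end

section
/- The asymptotic fixed-point approximation: for small ε > 0 with ε := σ₁²σ₂², the solution x* of x = (4/π)·ln(π/(ε√x)) satisfies x* = (4/π)·ln(π^{3/2}/(2ε)) + o(ln(1/ε)) as ε → 0; in particular x* / ((4/π) ln(1/ε)) → 1 as ε → 0⁺. -/
open Real Filter Asymptotics

/-- Asymptotic fixed-point approximation for the optimal gain in the GKP-TMS
optimization: if `x*(ε)` solves `x = (4/π)·ln(π/(ε√x))` (with `x*(ε) > 0`) for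
small `ε = σ₁²σ₂² > 0`, then
`x*(ε) = (4/π)·ln(π^{3/2}/(2ε)) + o(ln(1/ε))` as `ε → 0⁺`; in particular
`x*(ε)/((4/π)ln(1/ε)) → 1`. -/
theorem tms_fixed_point_asymptotics (x : ℝ → ℝ)
    (hx : ∀ ε ∈ Set.Ioo (0 : ℝ) 1, 0 < x ε ∧
      x ε = (4 / Real.pi) * Real.log (Real.pi / (ε * Real.sqrt (x ε)))) :
    (fun ε => x ε - (4 / Real.pi) * Real.log (Real.pi ^ ((3 : ℝ) / 2) / (2 * ε)))
        =o[nhdsWithin 0 (Set.Ioi 0)] (fun ε => Real.log (1 / ε)) ∧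
    Tendsto (fun ε => x ε / ((4 / Real.pi) * Real.log (1 / ε)))
      (nhdsWithin 0 (Set.Ioi 0)) (nhds 1) := by
  have hpi : (0:ℝ) < Real.pi := Real.pi_pos
  have hpi1 : (1:ℝ) < Real.pi := by linarith [Real.pi_gt_three]
  have hlogpi : (0:ℝ) ≤ Real.log Real.pi := Real.log_nonneg hpi1.le
  set F := nhdsWithin (0:ℝ) (Set.Ioi 0) with hF
  set L : ℝ → ℝ := fun ε => Real.log (1/ε) with hL
  have hIoo : Set.Ioo (0:ℝ) 1 ∈ F := Ioo_mem_nhdsGT_of_mem (by constructor <;> norm_num)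
  have hl : Tendsto L F atTop := by
    have := Real.tendsto_log_nhdsGT_zero
    have hneg : Tendsto (fun ε : ℝ => -Real.log ε) F atTop := tendsto_neg_atBot_atTop.comp this
    refine hneg.congr (fun ε => ?_)
    simp [hL, one_div, Real.log_inv]
  -- key equation
  have key : ∀ᶠ ε in F, 0 < x ε ∧
      Real.pi * x ε + 2 * Real.log (x ε) = 4 * (Real.log Real.pi + L ε) := by
    filter_upwards [hIoo] with ε hε
    obtain ⟨hxp, hxe⟩ := hx ε hε
    have hε0 : 0 < ε := hε.1
    have hs : 0 < Real.sqrt (x ε) := Real.sqrt_pos.mpr hxp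
    refine ⟨hxp, ?_⟩
    have hlog : Real.log (Real.pi / (ε * Real.sqrt (x ε)))
        = Real.log Real.pi - Real.log ε - (1/2) * Real.log (x ε) := by
      rw [Real.log_div hpi.ne' (by positivity), Real.log_mul hε0.ne' hs.ne',
        Real.log_sqrt hxp.le]
      ring
    rw [hlog] at hxe
    field_simp at hxe
    have hLe : L ε = -Real.log ε := by simp [hL, one_div, Real.log_inv]
    rw [hLe]; linarith
  -- eventually x ≥ 1 and x ≤ (4/π)(log π + L)
  have hbound : ∀ᶠ ε in F, 1 ≤ x ε ∧ x ε ≤ (4/Real.pi) * (Real.log Real.pi + L ε) := by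
    filter_upwards [key, hl.eventually_ge_atTop Real.pi] with ε ⟨hxp, heq⟩ hLge
    have h1 : 1 ≤ x ε := by
      by_contra h
      push_neg at h
      have hlogneg : Real.log (x ε) < 0 := Real.log_neg hxp h
      nlinarith
    have hlognn : 0 ≤ Real.log (x ε) := Real.log_nonneg h1
    refine ⟨h1, ?_⟩
    rw [div_mul_eq_mul_div, le_div_iff₀ hpi]
    nlinarith
  set M : ℝ → ℝ := fun ε => (4/Real.pi) * (Real.log Real.pi + L ε) with hM
  have hMtop : Tendsto M F atTop :=
    (tendsto_atTop_add_const_left F (Real.log Real.pi) hl).const_mul_atTop (by positivity)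
  have hlogM : (fun ε => Real.log (M ε)) =o[F] M :=
    Real.isLittleO_log_id_atTop.comp_tendsto hMtop
  have hMO : M =O[F] L := by
    refine IsBigO.of_bound 3 ?_
    filter_upwards [hl.eventually_ge_atTop (max 1 (Real.log Real.pi))] with ε hε
    have h1 : 1 ≤ L ε := le_trans (le_max_left _ _) hε
    have h2 : Real.log Real.pi ≤ L ε := le_trans (le_max_right _ _) hε
    have hMe : M ε = 4/Real.pi * (Real.log Real.pi + L ε) := rfl
    rw [Real.norm_eq_abs, Real.norm_eq_abs, abs_of_nonneg (by rw [hMe]; positivity),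
      abs_of_nonneg (by linarith), hMe, div_mul_eq_mul_div, div_le_iff₀ hpi]
    nlinarith [Real.pi_gt_three]
  have hxOlogM : (fun ε => Real.log (x ε)) =O[F] (fun ε => Real.log (M ε)) := by
    refine IsBigO.of_bound 1 ?_
    filter_upwards [hbound] with ε ⟨h1, h2⟩
    have hx0 : 0 < x ε := by linarith
    have hM1 : 1 ≤ M ε := le_trans h1 h2
    have hle : Real.log (x ε) ≤ Real.log (M ε) := Real.log_le_log hx0 h2
    rw [Real.norm_eq_abs, Real.norm_eq_abs, abs_of_nonneg (Real.log_nonneg h1),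
      abs_of_nonneg (Real.log_nonneg hM1), one_mul]
    exact hle
  have hlogx : (fun ε => Real.log (x ε)) =o[F] L :=
    (hxOlogM.trans_isLittleO hlogM).trans_isBigO hMO
  have hconst : ∀ c : ℝ, (fun _ : ℝ => c) =o[F] L := fun c =>
    isLittleO_const_left.mpr (Or.inr (tendsto_norm_atTop_atTop.comp hl))
  -- expression for difference
  have hdiff : ∀ᶠ ε in F,
      x ε - (4/Real.pi) * Real.log (Real.pi ^ ((3:ℝ)/2) / (2*ε))
        = (4/Real.pi) * (Real.log 2 - (1/2) * Real.log Real.pi)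
          - (2/Real.pi) * Real.log (x ε) := by
    filter_upwards [key, hIoo] with ε ⟨hxp, heq⟩ hε
    have hε0 : 0 < ε := hε.1
    have hlog32 : Real.log (Real.pi ^ ((3:ℝ)/2) / (2*ε))
        = (3/2) * Real.log Real.pi - (Real.log 2 + Real.log ε) := by
      rw [Real.log_div (by positivity) (by positivity), Real.log_rpow hpi,
        Real.log_mul (by norm_num) hε0.ne']
    have hLe : L ε = -Real.log ε := by simp [hL, one_div, Real.log_inv]
    rw [hlog32]
    rw [hLe] at heq
    field_simp
    linear_combination 2 * heq
  have part1 : (fun ε => x ε - (4/Real.pi) * Real.log (Real.pi ^ ((3:ℝ)/2) / (2*ε)))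
      =o[F] L := by
    have := (hconst ((4/Real.pi) * (Real.log 2 - (1/2) * Real.log Real.pi))).sub
      (hlogx.const_mul_left (2/Real.pi))
    exact this.congr' (hdiff.mono fun ε h => h.symm) EventuallyEq.rfl
  refine ⟨part1, ?_⟩
  -- second part
  have h2 : (fun ε => x ε - (4/Real.pi) * L ε) =o[F] L := by
    have e : ∀ᶠ ε in F, x ε - (4/Real.pi) * L ε
        = (x ε - (4/Real.pi) * Real.log (Real.pi ^ ((3:ℝ)/2) / (2*ε)))
          + (4/Real.pi) * ((3/2) * Real.log Real.pi - Real.log 2) := by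
      filter_upwards [hIoo] with ε hε
      have hε0 : 0 < ε := hε.1
      have hlog32 : Real.log (Real.pi ^ ((3:ℝ)/2) / (2*ε))
          = (3/2) * Real.log Real.pi - (Real.log 2 + Real.log ε) := by
        rw [Real.log_div (by positivity) (by positivity), Real.log_rpow hpi,
          Real.log_mul (by norm_num) hε0.ne']
      have hLe : L ε = -Real.log ε := by simp [hL, one_div, Real.log_inv]
      rw [hlog32, hLe]
      ring
    exact (part1.add (hconst _)).congr' (e.mono fun ε h => h.symm) EventuallyEq.rfl
  have htend := h2.tendsto_div_nhds_zero
  have htend2 : Tendsto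
      (fun ε => (x ε - (4/Real.pi) * L ε) / L ε * (Real.pi/4) + 1) F (nhds 1) := by
    have := (htend.mul_const (Real.pi/4)).add_const 1
    simpa using this
  refine htend2.congr' ?_
  filter_upwards [hl.eventually_gt_atTop 0] with ε hLpos
  simp only [hL, one_div] at hLpos ⊢
  have := hLpos.ne'
  field_simp
  ring_nf
  rw [mul_inv_cancel₀ this]
  ring
end
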